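/- Let X be a Lefschetz complex over a ring R with unity and let 𝒱 be a multivector field on X with X invariant. Then the family 𝓑 of all basic sets of 𝒱 is a Morse decomposition of X. -/

import Mathlib

open scoped Classical

namespace CMVF

variable {R : Type*} [Ring R] {X : Type*} [Fintype X]

/-- A Lefschetz complex over `R` with cells `X`. -/
structure Lefschetz (R : Type*) [Ring R] (X : Type*) [Fintype X] where
  dim : X → ℕ
  κ : X → X → R
  dim_facet : ∀ x y, κ x y ≠ 0 → dim x = dim y + 1
  κ_sq : ∀ x z, (∑ y : X, κ x y * κ y z) = 0

namespace Lefschetz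

variable (L : Lefschetz R X)

/-- The face order `y ≤κ x` : the partial order generated by the facet relation. -/
def le (y x : X) : Prop := Relation.ReflTransGen (fun a b => L.κ b a ≠ 0) y x

/-- Closure of a set of cells: all faces of cells of `A`. -/
def cls (A : Set X) : Set X := {z | ∃ a ∈ A, L.le z a}

/-- Closure of a single cell. -/
def clPt (x : X) : Set X := L.cls {x}

/-- The minimal open set containing `x`. -/
def opn (x : X) : Set X := {z | L.le x z}

/-- `A` is closed. -/
def Closed (A : Set X) : Prop := L.cls A = A

/-- The mouth of `A`. -/
def mo (A : Set X) : Set X := L.cls A \ A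

/-- `A` is proper: its mouth is closed. -/
def Proper (A : Set X) : Prop := L.Closed (L.mo A)

/-- Relative closure within an ambient subcomplex `W`. -/
def clsIn (W A : Set X) : Set X := L.cls A ∩ W

/-- Relative mouth within an ambient subcomplex `W`. -/
def moIn (W A : Set X) : Set X := L.clsIn W A \ A

/-- The boundary operator of the subcomplex determined by `A`
(`∂ x = ∑ y ∈ A, κ x y • y` for `x ∈ A`). -/
noncomputable def bd (A : Set X) : (X → R) →ₗ[R] (X → R) where
  toFun f := fun y => if y ∈ A then ∑ x : X, (if x ∈ A then f x * L.κ x y else 0) else 0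
  map_add' f g := by
    funext y
    by_cases hy : y ∈ A
    · simp only [hy, if_true, Pi.add_apply]
      rw [← Finset.sum_add_distrib]
      refine Finset.sum_congr rfl fun x _ => ?_
      by_cases hx : x ∈ A <;> simp [hx, add_mul]
    · simp [hy]
  map_smul' r f := by
    funext y
    by_cases hy : y ∈ A
    · simp only [hy, if_true, Pi.smul_apply, smul_eq_mul, RingHom.id_apply]
      rw [Finset.mul_sum]
      refine Finset.sum_congr rfl fun x _ => ?_
      by_cases hx : x ∈ A <;> simp [hx, mul_assoc]
    · simp [hy]

/-- The `n`-chains of the subcomplex determined by `A`. -/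
noncomputable def chainGroup (A : Set X) (n : ℕ) : Submodule R (X → R) :=
  Submodule.span R {f | ∃ x ∈ A, L.dim x = n ∧ f = Pi.single x 1}

/-- The `n`-cycles of the subcomplex determined by `A`. -/
noncomputable def cycles (A : Set X) (n : ℕ) : Submodule R (X → R) :=
  L.chainGroup A n ⊓ LinearMap.ker (L.bd A)

/-- The `n`-boundaries of the subcomplex determined by `A`. -/
noncomputable def boundaries (A : Set X) (n : ℕ) : Submodule R (X → R) :=
  (L.chainGroup A (n + 1)).map (L.bd A)

/-- The Lefschetz homology `H^κ_n(A)` of the subcomplex determined by `A`. -/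
noncomputable def homology (A : Set X) (n : ℕ) : Type _ :=
  (L.cycles A n) ⧸ ((L.boundaries A n).comap (L.cycles A n).subtype)

noncomputable instance homologyAddCommGroup (A : Set X) (n : ℕ) :
    AddCommGroup (L.homology A n) :=
  inferInstanceAs (AddCommGroup
    ((L.cycles A n) ⧸ ((L.boundaries A n).comap (L.cycles A n).subtype)))

noncomputable instance homologyModule (A : Set X) (n : ℕ) :
    Module R (L.homology A n) :=
  inferInstanceAs (Module R
    ((L.cycles A n) ⧸ ((L.boundaries A n).comap (L.cycles A n).subtype)))

/-- `A` is a zero space: its Lefschetz homology vanishes. -/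
def HomologyZero (A : Set X) : Prop := ∀ n, Subsingleton (L.homology A n)

/-- The Poincaré polynomial `p_A(t) = ∑ rank H^κ_n(A) tⁿ`. -/
noncomputable def poincare (A : Set X) : Polynomial ℕ :=
  ∑ n ∈ Finset.image L.dim Finset.univ,
    Polynomial.C (Module.finrank R (L.homology A n)) * Polynomial.X ^ n

/-- `V` is a multivector: proper, with a unique maximal element. -/
def IsMV (V : Set X) : Prop :=
  L.Proper V ∧ ∃! m, m ∈ V ∧ ∀ x ∈ V, L.le x m

/-- A regular multivector: one with vanishing Lefschetz homology. -/
def Regular (V : Set X) : Prop := L.HomologyZero V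

end Lefschetz

/-- A combinatorial multivector field on a Lefschetz complex: a partition into multivectors. -/
structure MVField {R : Type*} [Ring R] {X : Type*} [Fintype X] (L : Lefschetz R X) where
  mvs : Set (Set X)
  isMV : ∀ V ∈ mvs, L.IsMV V
  cover : ∀ x : X, ∃! V, V ∈ mvs ∧ x ∈ V

namespace MVField

variable {L : Lefschetz R X} (F : MVField L)

/-- `[x]` : the multivector containing `x`. -/
noncomputable def mclass (x : X) : Set X := (F.cover x).exists.choose

lemma mclass_spec (x : X) : F.mclass x ∈ F.mvs ∧ x ∈ F.mclass x :=
  (F.cover x).exists.choose_spec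

/-- `x★` : the dominant cell of the multivector containing `x`. -/
noncomputable def star (x : X) : X :=
  ((F.isMV _ (F.mclass_spec x).1).2).exists.choose

/-- `[x]°` : the regular part of the multivector of `x`. -/
noncomputable def regPart (x : X) : Set X :=
  if L.Regular (F.mclass x) then F.mclass x else F.mclass x \ {F.star x}

/-- The multivalued map `Π_𝒱`. -/
noncomputable def Pi (x : X) : Set X :=
  if x = F.star x then L.clPt x \ F.regPart x else {F.star x}

/-- The multivalued map of the multivector field restricted to the subcomplex `W`. -/
noncomputable def PiIn (W : Set X) (x : X) : Set X := F.Pi x ∩ W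

/-- `φ : ℤ → X` is a full solution of the multivector field restricted to `W`. -/
def IsSolIn (W : Set X) (φ : ℤ → X) : Prop := ∀ i, φ (i + 1) ∈ F.PiIn W (φ i)

/-- There is a full solution (of the field restricted to `W`) through `x` with values in `A`. -/
def FullSolThroughIn (W : Set X) (x : X) (A : Set X) : Prop :=
  ∃ φ : ℤ → X, F.IsSolIn W φ ∧ (∃ i, φ i = x) ∧ ∀ i, φ i ∈ A

/-- `A` is `𝒱`-compatible. -/
def Compat (A : Set X) : Prop := ∀ x ∈ A, F.mclass x ⊆ A

/-- `[A]⁻` : the maximal `𝒱`-compatible subset of `A`. -/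
def lowerC (A : Set X) : Set X := {x ∈ A | F.mclass x ⊆ A}

/-- `[A]⁺` : the minimal `𝒱`-compatible superset of `A`. -/
def upperC (A : Set X) : Set X := ⋃ x ∈ A, F.mclass x

/-- `Inv A`, the invariant part of `A`, computed in the subcomplex `W`. -/
def InvPartIn (W A : Set X) : Set X :=
  {x ∈ A | F.FullSolThroughIn W (F.star x) (F.lowerC A)}

/-- `A` is invariant (within the subcomplex `W`). -/
def InvariantIn (W A : Set X) : Prop := F.InvPartIn W A = A

/-- `φ` is a path (solution) on the integer interval `[a,b]`, within the subcomplex `W`. -/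
def IsPathOnIn (W : Set X) (a b : ℤ) (φ : ℤ → X) : Prop :=
  ∀ i, a ≤ i → i < b → φ (i + 1) ∈ F.PiIn W (φ i)

/-- `S` admits an internal tangency within the subcomplex `W`. -/
def HasInternalTangencyIn (W S : Set X) : Prop :=
  ∃ (a b : ℤ) (φ : ℤ → X), a ≤ b ∧ F.IsPathOnIn W a b φ ∧
    (∀ i, a ≤ i → i ≤ b → φ i ∈ L.clsIn W S) ∧ φ a ∈ S ∧ φ b ∈ S ∧
    ∃ i, a ≤ i ∧ i ≤ b ∧ φ i ∈ L.moIn W S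

/-- `S` is an isolated invariant set within the subcomplex `W`. -/
def IsoInvIn (W S : Set X) : Prop :=
  F.InvariantIn W S ∧ ¬ F.HasInternalTangencyIn W S

/-- `N` is a trapping region within the subcomplex `W`. -/
def TrappingIn (W N : Set X) : Prop :=
  N ⊆ W ∧ F.Compat N ∧ ∀ x ∈ N, F.PiIn W x ⊆ N

/-- `N` is a backward trapping region within the subcomplex `W`. -/
def BackTrappingIn (W N : Set X) : Prop :=
  N ⊆ W ∧ F.Compat N ∧ ∀ x ∈ W, ∀ y ∈ F.PiIn W x, y ∈ N → x ∈ N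

/-- `A` is an attractor within the subcomplex `W`. -/
def AttractorIn (W A : Set X) : Prop :=
  ∃ N, F.TrappingIn W N ∧ A = F.InvPartIn W N

/-- `A` is a repeller within the subcomplex `W`. -/
def RepellerIn (W A : Set X) : Prop :=
  ∃ N, F.BackTrappingIn W N ∧ A = F.InvPartIn W N

/-- The α-limit set of a full solution `φ`. -/
def alphaIn (W : Set X) (φ : ℤ → X) : Set X :=
  ⋂ k : ℕ, F.InvPartIn W (F.upperC (φ '' {i : ℤ | i ≤ -(k : ℤ)}))

/-- The ω-limit set of a full solution `φ`. -/
def omegaIn (W : Set X) (φ : ℤ → X) : Set X :=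
  ⋂ k : ℕ, F.InvPartIn W (F.upperC (φ '' {i : ℤ | (k : ℤ) ≤ i}))

/-- `C(A',A)` : the set of cells lying on connections running from `A'` to `A`. -/
def ConnIn (W A' A : Set X) : Set X :=
  {x | ∃ φ : ℤ → X, F.IsSolIn W φ ∧ (∃ i, φ i = F.star x) ∧
        F.alphaIn W φ ⊆ A' ∧ F.omegaIn W φ ⊆ A}

/-- `(A, Rp)` is an attractor-repeller pair in the subcomplex `W`. -/
def ARPairIn (W A Rp : Set X) : Prop :=
  F.AttractorIn W A ∧ F.RepellerIn W Rp ∧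
    A = F.InvPartIn W (W \ Rp) ∧ Rp = F.InvPartIn W (W \ A)

/-- `M` is a Morse decomposition of the subcomplex `W`, with admissible order `le`. -/
def MorseDecompIn (W : Set X) {P : Type*} [Finite P] (le : P → P → Prop)
    (M : P → Set X) : Prop :=
  IsPartialOrder P le ∧
  (∀ r, F.IsoInvIn W (M r)) ∧
  (∀ r r', r ≠ r' → Disjoint (M r) (M r')) ∧
  (∀ φ : ℤ → X, F.IsSolIn W φ →
    ∃ r r', le r r' ∧ F.alphaIn W φ ⊆ M r' ∧ F.omegaIn W φ ⊆ M r) ∧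
  (∀ φ : ℤ → X, F.IsSolIn W φ → ∀ r,
    F.alphaIn W φ ⊆ M r → F.omegaIn W φ ⊆ M r → Set.range φ ⊆ M r)

/-- The Morse set `M(I)` of a family of sets indexed by `I ⊆ P`. -/
def MorseSetIn (W : Set X) {P : Type*} (M : P → Set X) (I : Set P) : Set X :=
  ⋃ r ∈ I, ⋃ r' ∈ I, F.ConnIn W (M r') (M r)

/-- `(P₁, P₂)` is an index pair for the isolated invariant set `S`. -/
def IndexPair (S P₁ P₂ : Set X) : Prop :=
  L.Closed P₁ ∧ L.Closed P₂ ∧ P₂ ⊆ P₁ ∧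
  (∀ x ∈ P₂, ∀ y ∈ F.Pi x, y ∈ P₁ → y ∈ P₂) ∧
  (∀ x ∈ P₁, (∃ y ∈ F.Pi x, y ∉ P₁) → x ∈ P₂) ∧
  S = F.InvPartIn Set.univ (P₁ \ P₂)

/-- `x ⤳_A y` : there is a path of length at least two in `A` from `x★` to `y★`. -/
def PathConn (A : Set X) (x y : X) : Prop :=
  ∃ (a b : ℤ) (φ : ℤ → X), a < b ∧
    (∀ i, a ≤ i → i < b → φ (i + 1) ∈ F.Pi (φ i)) ∧
    (∀ i, a ≤ i → i ≤ b → φ i ∈ A) ∧ φ a = F.star x ∧ φ b = F.star y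

/-- The chain recurrent set. -/
def CR : Set X := {x | F.PathConn Set.univ x x}

/-- `B` is a basic set: an equivalence class of mutual connectedness in `CR`. -/
def IsBasicSet (B : Set X) : Prop :=
  ∃ x ∈ F.CR, B = {y ∈ F.CR | F.PathConn Set.univ x y ∧ F.PathConn Set.univ y x}

/-- The set `E_P` of cells of `P₁` all of whose forward solutions meet `P₂`. -/
def Ep (P₁ P₂ : Set X) : Set X :=
  {x ∈ P₁ | ∀ φ : ℕ → X, φ 0 = x → (∀ i, φ (i + 1) ∈ F.Pi (φ i)) → ∃ i, φ i ∈ P₂}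

/-- The preorder `≤_𝒱` induced by the arrows of the multivector field. -/
def leV : X → X → Prop := Relation.ReflTransGen (fun y x => y ∈ F.Pi x)

/-- The multivector field is acyclic: `≤_𝒱` is a partial order. -/
def Acyclic : Prop := ∀ x y, F.leV x y → F.leV y x → x = y

end MVField

end CMVF

open CMVF

variable {R : Type*} [Ring R] {X : Type*} [Fintype X]


section AuxBSMD

variable {R : Type*} [Ring R] {X : Type*} [Fintype X] {L : Lefschetz R X}

/-- One step of the multivector field dynamics. -/
def Stp (F : MVField L) (a b : X) : Prop := b ∈ F.Pi a

variable {F : MVField L}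

lemma mclass_eq_of_mem {x y : X} (h : y ∈ F.mclass x) : F.mclass y = F.mclass x :=
  (F.cover y).unique ⟨(F.mclass_spec y).1, (F.mclass_spec y).2⟩ ⟨(F.mclass_spec x).1, h⟩

lemma star_spec (x : X) :
    F.star x ∈ F.mclass x ∧ ∀ z ∈ F.mclass x, L.le z (F.star x) :=
  ((F.isMV _ (F.mclass_spec x).1).2).exists.choose_spec

lemma star_eq_of_mem {x y : X} (h : y ∈ F.mclass x) : F.star y = F.star x := by
  have hy := star_spec (F := F) y
  rw [mclass_eq_of_mem h] at hy
  exact ((F.isMV _ (F.mclass_spec x).1).2).unique hy (star_spec x)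

lemma fstar_idem (x : X) : F.star (F.star x) = F.star x :=
  star_eq_of_mem (star_spec x).1

lemma star_mem_pi {x : X} (h : x ≠ F.star x) : F.star x ∈ F.Pi x := by
  simp [MVField.Pi, h]

lemma eq_star_of_mem_pi {x y : X} (hy : y ∈ F.Pi x) (h : x ≠ F.star x) : y = F.star x := by
  simpa [MVField.Pi, h] using hy

lemma rt_star (x : X) : Relation.ReflTransGen (Stp F) x (F.star x) := by
  by_cases h : x = F.star x
  · rw [← h]
  · exact Relation.ReflTransGen.single (star_mem_pi h)

lemma tg_star_of_rt {p q : X} (h : Relation.ReflTransGen (Stp F) p q)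
    (hc : Relation.TransGen (Stp F) (F.star p) (F.star p) ∨
          Relation.TransGen (Stp F) (F.star q) (F.star q)) :
    Relation.TransGen (Stp F) (F.star p) (F.star q) := by
  rcases h.cases_head with rfl | ⟨d, hd, hdq⟩
  · exact hc.elim id id
  · by_cases hp : p = F.star p
    · have h1 : Relation.TransGen (Stp F) p (F.star q) :=
        ((Relation.TransGen.single hd).trans_left hdq).trans_left (rt_star q)
      rwa [← hp]
    · have hd' : d = F.star p := eq_star_of_mem_pi hd hp
      subst hd'
      have h2 : Relation.ReflTransGen (Stp F) (F.star p) (F.star q) := hdq.trans (rt_star q)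
      rcases hc with hc | hc
      · exact hc.trans_left h2
      · exact Relation.TransGen.trans_right h2 hc

lemma cycle_star {p : X} (h : Relation.TransGen (Stp F) p p) :
    Relation.TransGen (Stp F) (F.star p) (F.star p) := by
  by_cases hp : p = F.star p
  · rwa [← hp]
  · obtain ⟨d, hd, hdp⟩ := Relation.TransGen.head'_iff.mp h
    have hd' : d = F.star p := eq_star_of_mem_pi hd hp
    subst hd'
    exact Relation.TransGen.tail' hdp (star_mem_pi hp)

private lemma rt_seg_aux (φ : ℤ → X) (a : ℤ) :
    ∀ n : ℕ, (∀ i, a ≤ i → i < a + n → φ (i + 1) ∈ F.Pi (φ i)) →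
      Relation.ReflTransGen (Stp F) (φ a) (φ (a + n)) := by
  intro n
  induction n with
  | zero => intro _; simpa using Relation.ReflTransGen.refl
  | succ k ih =>
    intro h
    have hk : (a + ((k : ℕ) + 1 : ℕ) : ℤ) = (a + k) + 1 := by push_cast; ring
    rw [hk]
    exact (ih (fun i hi hib => h i hi (by omega))).tail (h (a + k) (by omega) (by omega))

lemma rt_seg (φ : ℤ → X) {a b : ℤ} (hab : a ≤ b)
    (h : ∀ i, a ≤ i → i < b → φ (i + 1) ∈ F.Pi (φ i)) :
    Relation.ReflTransGen (Stp F) (φ a) (φ b) := by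
  have hb : b = a + ((b - a).toNat : ℕ) := by omega
  rw [hb]
  exact rt_seg_aux φ a _ (fun i hi hib => h i hi (by omega))

lemma tg_seg (φ : ℤ → X) {a b : ℤ} (hab : a < b)
    (h : ∀ i, a ≤ i → i < b → φ (i + 1) ∈ F.Pi (φ i)) :
    Relation.TransGen (Stp F) (φ a) (φ b) := by
  have h1 : Relation.TransGen (Stp F) (φ a) (φ (a + 1)) :=
    Relation.TransGen.single (h a le_rfl hab)
  exact h1.trans_left (rt_seg φ (by omega) (fun i hi hib => h i (by omega) hib))

lemma exists_fun_of_tg {x y : X} (h : Relation.TransGen (Stp F) x y) :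
    ∃ (n : ℤ) (φ : ℤ → X), 0 < n ∧ φ 0 = x ∧ φ n = y ∧
      ∀ i, 0 ≤ i → i < n → φ (i + 1) ∈ F.Pi (φ i) := by
  induction h with
  | @single b hxy =>
    refine ⟨1, fun i => if i ≤ 0 then x else b, one_pos, by simp, by simp, ?_⟩
    intro i h0 h1
    have hi : i = 0 := by omega
    subst hi
    simpa [Stp] using hxy
  | @tail b c hxb hby ih =>
    obtain ⟨n, φ, hn, h0, hb, hst⟩ := ih
    refine ⟨n + 1, fun i => if i ≤ n then φ i else c, by omega, ?_, ?_, ?_⟩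
    · simpa [show (0:ℤ) ≤ n by omega] using h0
    · simp
    · intro i h0i hi
      by_cases hcase : i < n
      · simpa [show i ≤ n by omega, show i + 1 ≤ n by omega] using hst i h0i hcase
      · have hi' : i = n := by omega
        subst hi'
        simpa [show ¬ (i + 1 ≤ i) by omega, hb, Stp] using hby

lemma periodic_sol (φ : ℤ → X) {a b : ℤ} (hab : a < b)
    (hst : ∀ i, a ≤ i → i < b → φ (i + 1) ∈ F.Pi (φ i)) (hper : φ b = φ a) :
    ∃ ψ : ℤ → X, F.IsSolIn Set.univ ψ ∧ ψ 0 = φ a ∧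
      (a + 1 < b → ψ 1 = φ (a + 1)) ∧ ∀ i, ∃ j, a ≤ j ∧ j < b ∧ ψ i = φ j := by
  set m := b - a with hm
  have hm0 : 0 < m := by omega
  refine ⟨fun i => φ (a + i % m), ?_, ?_, ?_, ?_⟩
  · intro i
    have hj0 : 0 ≤ i % m := Int.emod_nonneg i (by omega)
    have hjm : i % m < m := Int.emod_lt_of_pos i hm0
    have hstep : φ (a + i % m + 1) ∈ F.Pi (φ (a + i % m)) :=
      hst _ (by omega) (by omega)
    have key : (i + 1) % m = (i % m + 1) % m := by
      conv_lhs => rw [show i + 1 = i % m + 1 + m * (i / m) by rw [Int.emod_def]; ring]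
      apply Int.add_mul_emod_self_left
    have harg : φ (a + (i + 1) % m) = φ (a + i % m + 1) := by
      by_cases hle : i % m + 1 < m
      · rw [key, Int.emod_eq_of_lt (by omega) hle, ← add_assoc]
      · have hmeq : i % m + 1 = m := by omega
        rw [key, hmeq, Int.emod_self, add_zero, ← hper]
        congr 1
        omega
    refine Set.mem_inter ?_ (Set.mem_univ _)
    show φ (a + (i + 1) % m) ∈ F.Pi (φ (a + i % m))
    rw [harg]; exact hstep
  · show φ (a + 0 % m) = φ a
    norm_num
  · intro h
    show φ (a + 1 % m) = φ (a + 1)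
    rw [Int.emod_eq_of_lt (by omega) (by omega)]
  · intro i
    have hj0 : 0 ≤ i % m := Int.emod_nonneg i (by omega)
    have hjm : i % m < m := Int.emod_lt_of_pos i hm0
    exact ⟨a + i % m, by omega, by omega, rfl⟩

lemma pathConn_iff {x y : X} :
    F.PathConn Set.univ x y ↔ Relation.TransGen (Stp F) (F.star x) (F.star y) := by
  constructor
  · rintro ⟨a, b, φ, hab, hst, -, ha, hb⟩
    have ht := tg_seg φ hab hst
    rwa [ha, hb] at ht
  · intro h
    obtain ⟨n, φ, hn, h0, hn', hst⟩ := exists_fun_of_tg h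
    exact ⟨0, n, φ, hn, hst, fun i _ _ => Set.mem_univ _, h0, hn'⟩

lemma cr_iff {x : X} :
    x ∈ F.CR ↔ Relation.TransGen (Stp F) (F.star x) (F.star x) :=
  pathConn_iff

/-- The basic set generated by `x`. -/
def bset (F : MVField L) (x : X) : Set X :=
  {y ∈ F.CR | F.PathConn Set.univ x y ∧ F.PathConn Set.univ y x}

lemma mem_bset {x y : X} :
    y ∈ bset F x ↔ Relation.TransGen (Stp F) (F.star y) (F.star y) ∧
      Relation.TransGen (Stp F) (F.star x) (F.star y) ∧
      Relation.TransGen (Stp F) (F.star y) (F.star x) := by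
  constructor
  · rintro ⟨h1, h2, h3⟩
    exact ⟨cr_iff.mp h1, pathConn_iff.mp h2, pathConn_iff.mp h3⟩
  · rintro ⟨h1, h2, h3⟩
    exact ⟨cr_iff.mpr h1, pathConn_iff.mpr h2, pathConn_iff.mpr h3⟩

lemma self_mem_bset {x : X}
    (h : Relation.TransGen (Stp F) (F.star x) (F.star x)) : x ∈ bset F x :=
  mem_bset.mpr ⟨h, h, h⟩

lemma mclass_subset_bset {x z w : X} (hz : z ∈ bset F x) (hw : w ∈ F.mclass z) :
    w ∈ bset F x := by
  have hsw : F.star w = F.star z := star_eq_of_mem hw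
  obtain ⟨h1, h2, h3⟩ := mem_bset.mp hz
  exact mem_bset.mpr ⟨by rwa [hsw], by rwa [hsw], by rwa [hsw]⟩

lemma between_mem_bset {x p q c : X} (hp : p ∈ bset F x) (hq : q ∈ bset F x)
    (h1 : Relation.ReflTransGen (Stp F) p c) (h2 : Relation.ReflTransGen (Stp F) c q) :
    c ∈ bset F x := by
  obtain ⟨hpc, hxp, hpx⟩ := mem_bset.mp hp
  obtain ⟨hqc, hxq, hqx⟩ := mem_bset.mp hq
  have t1 : Relation.TransGen (Stp F) (F.star p) (F.star c) := tg_star_of_rt h1 (Or.inl hpc)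
  have t2 : Relation.TransGen (Stp F) (F.star c) (F.star q) := tg_star_of_rt h2 (Or.inr hqc)
  have hqp : Relation.TransGen (Stp F) (F.star q) (F.star p) := hqx.trans hxp
  exact mem_bset.mpr ⟨(t2.trans hqp).trans t1, hxp.trans t1, t2.trans hqx⟩

lemma bset_eq_of_conn {p q : X}
    (h1 : Relation.TransGen (Stp F) (F.star p) (F.star q))
    (h2 : Relation.TransGen (Stp F) (F.star q) (F.star p)) :
    bset F p = bset F q := by
  ext v
  simp only [mem_bset]
  constructor
  · rintro ⟨a1, a2, a3⟩; exact ⟨a1, h2.trans a2, a3.trans h1⟩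
  · rintro ⟨a1, a2, a3⟩; exact ⟨a1, h1.trans a2, a3.trans h2⟩

lemma bset_eq_of_overlap {p q u : X} (h1 : u ∈ bset F p) (h2 : u ∈ bset F q) :
    bset F p = bset F q := by
  obtain ⟨-, hpu, hup⟩ := mem_bset.mp h1
  obtain ⟨-, hqu, huq⟩ := mem_bset.mp h2
  exact bset_eq_of_conn (hpu.trans huq) (hqu.trans hup)

lemma exists_back_rec (φ : ℤ → X) : ∃ z : X, ∀ N : ℤ, ∃ i, i ≤ N ∧ φ i = z := by
  by_contra h
  push_neg at h
  choose N hN using h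
  have : Nonempty X := ⟨φ 0⟩
  have hne : (Finset.univ : Finset X).Nonempty := Finset.univ_nonempty
  exact hN (φ (Finset.univ.inf' hne N)) _ (Finset.inf'_le N (Finset.mem_univ _)) rfl

lemma exists_fwd_rec (φ : ℤ → X) : ∃ w : X, ∀ N : ℤ, ∃ i, N ≤ i ∧ φ i = w := by
  by_contra h
  push_neg at h
  choose N hN using h
  have : Nonempty X := ⟨φ 0⟩
  have hne : (Finset.univ : Finset X).Nonempty := Finset.univ_nonempty
  exact hN (φ (Finset.univ.sup' hne N)) _ (Finset.le_sup' N (Finset.mem_univ _)) rfl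

lemma mem_upperC {A : Set X} {u : X} : u ∈ F.upperC A ↔ ∃ a ∈ A, u ∈ F.mclass a := by
  simp [MVField.upperC]

lemma sol_step {φ : ℤ → X} (h : F.IsSolIn Set.univ φ) (i : ℤ) :
    φ (i + 1) ∈ F.Pi (φ i) := (h i).1

lemma sol_tg {φ : ℤ → X} (h : F.IsSolIn Set.univ φ) {i j : ℤ} (hij : i < j) :
    Relation.TransGen (Stp F) (φ i) (φ j) :=
  tg_seg φ hij (fun t _ _ => sol_step h t)

lemma rec_cycle {φ : ℤ → X} (hφ : F.IsSolIn Set.univ φ) {z : X}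
    (hz : ∀ N : ℤ, ∃ i, i ≤ N ∧ φ i = z) :
    Relation.TransGen (Stp F) (F.star z) (F.star z) := by
  obtain ⟨i₂, -, he₂⟩ := hz 0
  obtain ⟨i₁, h1, he₁⟩ := hz (i₂ - 1)
  have ht := sol_tg hφ (show i₁ < i₂ by omega)
  rw [he₁, he₂] at ht
  exact cycle_star ht

lemma rec_cycle_fwd {φ : ℤ → X} (hφ : F.IsSolIn Set.univ φ) {w : X}
    (hw : ∀ N : ℤ, ∃ i, N ≤ i ∧ φ i = w) :
    Relation.TransGen (Stp F) (F.star w) (F.star w) := by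
  obtain ⟨i₁, -, he₁⟩ := hw 0
  obtain ⟨i₂, h2, he₂⟩ := hw (i₁ + 1)
  have ht := sol_tg hφ (show i₁ < i₂ by omega)
  rw [he₁, he₂] at ht
  exact cycle_star ht

lemma invariant_bset {x : X}
    (hx : Relation.TransGen (Stp F) (F.star x) (F.star x)) :
    F.InvariantIn Set.univ (bset F x) := by
  apply Set.Subset.antisymm
  · exact fun y hy => hy.1
  · intro y hy
    refine ⟨hy, ?_⟩
    have hyc : Relation.TransGen (Stp F) (F.star y) (F.star y) := (mem_bset.mp hy).1
    obtain ⟨n, φ, hn, h0, hn', hst⟩ := exists_fun_of_tg hyc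
    obtain ⟨ψ, hsol, hψ0, -, hval⟩ := periodic_sol φ hn hst (by rw [h0, hn'])
    refine ⟨ψ, hsol, ⟨0, by rw [hψ0, h0]⟩, ?_⟩
    intro i
    obtain ⟨j, hj0, hjn, hij⟩ := hval i
    have hsy : F.star y ∈ bset F x := mclass_subset_bset hy (star_spec y).1
    have hr1 : Relation.ReflTransGen (Stp F) (F.star y) (φ j) := by
      rw [← h0]
      exact rt_seg φ hj0 (fun t ht htj => hst t ht (by omega))
    have hr2 : Relation.ReflTransGen (Stp F) (φ j) (F.star y) := by
      rw [← hn']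
      exact rt_seg φ (show j ≤ n by omega) (fun t ht htn => hst t (by omega) htn)
    have hmem : φ j ∈ bset F x := between_mem_bset hsy hsy hr1 hr2
    rw [hij]
    exact ⟨hmem, fun v hv => mclass_subset_bset hmem hv⟩

lemma no_tangency_bset {x : X} : ¬ F.HasInternalTangencyIn Set.univ (bset F x) := by
  rintro ⟨a, b, φ, hab, hpath, -, ha, hb, i, hia, hib, hmo⟩
  have hstep : ∀ t, a ≤ t → t < b → φ (t + 1) ∈ F.Pi (φ t) :=
    fun t h1 h2 => (hpath t h1 h2).1
  have h1 : Relation.ReflTransGen (Stp F) (φ a) (φ i) :=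
    rt_seg φ hia (fun t ht1 ht2 => hstep t ht1 (by omega))
  have h2 : Relation.ReflTransGen (Stp F) (φ i) (φ b) :=
    rt_seg φ hib (fun t ht1 ht2 => hstep t (by omega) ht2)
  exact hmo.2 (between_mem_bset ha hb h1 h2)

lemma alpha_subset {φ : ℤ → X} (hφ : F.IsSolIn Set.univ φ) {z : X}
    (hz : ∀ N : ℤ, ∃ i, i ≤ N ∧ φ i = z) :
    F.alphaIn Set.univ φ ⊆ bset F z := by
  have cycz := rec_cycle hφ hz
  intro u hu
  obtain ⟨j₁, hj₁, hj₁z⟩ := hz 0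
  have hk := Set.mem_iInter.mp hu (1 - j₁).toNat
  have hup : u ∈ F.upperC (φ '' {i : ℤ | i ≤ -(((1 - j₁).toNat : ℕ) : ℤ)}) := hk.1
  obtain ⟨c, hc, hum⟩ := mem_upperC.mp hup
  obtain ⟨i, hi, rfl⟩ := hc
  have hi' : i ≤ -(((1 - j₁).toNat : ℕ) : ℤ) := hi
  have htn : (((1 - j₁).toNat : ℕ) : ℤ) = 1 - j₁ := Int.toNat_of_nonneg (by omega)
  have hik : i ≤ j₁ - 1 := by omega
  obtain ⟨j₀, hj₀, hj₀z⟩ := hz (i - 1)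
  have t1 : Relation.TransGen (Stp F) z (φ i) := by
    have := sol_tg hφ (show j₀ < i by omega)
    rwa [hj₀z] at this
  have t2 : Relation.TransGen (Stp F) (φ i) z := by
    have := sol_tg hφ (show i < j₁ by omega)
    rwa [hj₁z] at this
  have s1 : Relation.TransGen (Stp F) (F.star z) (F.star (φ i)) :=
    tg_star_of_rt t1.to_reflTransGen (Or.inl cycz)
  have s2 : Relation.TransGen (Stp F) (F.star (φ i)) (F.star z) :=
    tg_star_of_rt t2.to_reflTransGen (Or.inr cycz)
  have hsu : F.star u = F.star (φ i) := star_eq_of_mem hum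
  exact mem_bset.mpr ⟨by rw [hsu]; exact s2.trans s1, by rw [hsu]; exact s1,
    by rw [hsu]; exact s2⟩

lemma omega_subset {φ : ℤ → X} (hφ : F.IsSolIn Set.univ φ) {w : X}
    (hw : ∀ N : ℤ, ∃ i, N ≤ i ∧ φ i = w) :
    F.omegaIn Set.univ φ ⊆ bset F w := by
  have cycw := rec_cycle_fwd hφ hw
  intro u hu
  obtain ⟨j₁, hj₁, hj₁w⟩ := hw 0
  have hk := Set.mem_iInter.mp hu (j₁ + 1).toNat
  have hup : u ∈ F.upperC (φ '' {i : ℤ | ((((j₁ + 1).toNat : ℕ)) : ℤ) ≤ i}) := hk.1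
  obtain ⟨c, hc, hum⟩ := mem_upperC.mp hup
  obtain ⟨i, hi, rfl⟩ := hc
  have hi' : ((((j₁ + 1).toNat : ℕ)) : ℤ) ≤ i := hi
  have htn : ((((j₁ + 1).toNat : ℕ)) : ℤ) = j₁ + 1 := Int.toNat_of_nonneg (by omega)
  have hik : j₁ + 1 ≤ i := by omega
  obtain ⟨j₀, hj₀, hj₀w⟩ := hw (i + 1)
  have t1 : Relation.TransGen (Stp F) w (φ i) := by
    have := sol_tg hφ (show j₁ < i by omega)
    rwa [hj₁w] at this
  have t2 : Relation.TransGen (Stp F) (φ i) w := by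
    have := sol_tg hφ (show i < j₀ by omega)
    rwa [hj₀w] at this
  have s1 : Relation.TransGen (Stp F) (F.star w) (F.star (φ i)) :=
    tg_star_of_rt t1.to_reflTransGen (Or.inl cycw)
  have s2 : Relation.TransGen (Stp F) (F.star (φ i)) (F.star w) :=
    tg_star_of_rt t2.to_reflTransGen (Or.inr cycw)
  have hsu : F.star u = F.star (φ i) := star_eq_of_mem hum
  exact mem_bset.mpr ⟨by rw [hsu]; exact s2.trans s1, by rw [hsu]; exact s1,
    by rw [hsu]; exact s2⟩

lemma star_mem_alpha {φ : ℤ → X} (hφ : F.IsSolIn Set.univ φ) {z : X}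
    (hz : ∀ N : ℤ, ∃ i, i ≤ N ∧ φ i = z) :
    F.star z ∈ F.alphaIn Set.univ φ := by
  refine Set.mem_iInter.mpr (fun k => ?_)
  obtain ⟨i₂, hi₂, he₂⟩ := hz (-(k : ℤ))
  obtain ⟨i₁, hi₁, he₁⟩ := hz (i₂ - 2)
  refine ⟨mem_upperC.mpr ⟨φ i₂, ⟨i₂, hi₂, rfl⟩, by rw [he₂]; exact (star_spec z).1⟩, ?_⟩
  rw [fstar_idem]
  obtain ⟨ψ, hsol, hψ0, hψ1, hval⟩ :=
    periodic_sol φ (show i₁ < i₂ by omega) (fun t _ _ => sol_step hφ t) (by rw [he₁, he₂])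
  refine ⟨ψ, hsol, ?_, ?_⟩
  · by_cases hzd : z = F.star z
    · exact ⟨0, by rw [hψ0, he₁, ← hzd]⟩
    · refine ⟨1, ?_⟩
      have hstep : φ (i₁ + 1) ∈ F.Pi (φ i₁) := sol_step hφ i₁
      rw [he₁] at hstep
      rw [hψ1 (by omega)]
      exact eq_star_of_mem_pi hstep hzd
  · intro t
    obtain ⟨j, hj1, hj2, hjt⟩ := hval t
    rw [hjt]
    have hjk : j ≤ -(k : ℤ) := by omega
    exact ⟨mem_upperC.mpr ⟨φ j, ⟨j, hjk, rfl⟩, (F.mclass_spec (φ j)).2⟩,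
      fun v hv => mem_upperC.mpr ⟨φ j, ⟨j, hjk, rfl⟩, hv⟩⟩

lemma star_mem_omega {φ : ℤ → X} (hφ : F.IsSolIn Set.univ φ) {w : X}
    (hw : ∀ N : ℤ, ∃ i, N ≤ i ∧ φ i = w) :
    F.star w ∈ F.omegaIn Set.univ φ := by
  refine Set.mem_iInter.mpr (fun k => ?_)
  obtain ⟨i₁, hi₁, he₁⟩ := hw (k : ℤ)
  obtain ⟨i₂, hi₂, he₂⟩ := hw (i₁ + 2)
  refine ⟨mem_upperC.mpr ⟨φ i₁, ⟨i₁, hi₁, rfl⟩, by rw [he₁]; exact (star_spec w).1⟩, ?_⟩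
  rw [fstar_idem]
  obtain ⟨ψ, hsol, hψ0, hψ1, hval⟩ :=
    periodic_sol φ (show i₁ < i₂ by omega) (fun t _ _ => sol_step hφ t) (by rw [he₁, he₂])
  refine ⟨ψ, hsol, ?_, ?_⟩
  · by_cases hwd : w = F.star w
    · exact ⟨0, by rw [hψ0, he₁, ← hwd]⟩
    · refine ⟨1, ?_⟩
      have hstep : φ (i₁ + 1) ∈ F.Pi (φ i₁) := sol_step hφ i₁
      rw [he₁] at hstep
      rw [hψ1 (by omega)]
      exact eq_star_of_mem_pi hstep hwd
  · intro t
    obtain ⟨j, hj1, hj2, hjt⟩ := hval t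
    rw [hjt]
    have hjk : (k : ℤ) ≤ j := by omega
    exact ⟨mem_upperC.mpr ⟨φ j, ⟨j, hjk, rfl⟩, (F.mclass_spec (φ j)).2⟩,
      fun v hv => mem_upperC.mpr ⟨φ j, ⟨j, hjk, rfl⟩, hv⟩⟩

end AuxBSMD

/-- Theorem: the family of all basic sets of `𝒱` is a Morse decomposition of `X`
(for some admissible partial order). -/
theorem basic_sets_morse_decomposition (L : Lefschetz R X) (F : MVField L)
    (hX : F.InvariantIn Set.univ Set.univ) :
    ∃ le : {B : Set X // F.IsBasicSet B} → {B : Set X // F.IsBasicSet B} → Prop,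
      F.MorseDecompIn Set.univ le (fun B => (B : Set X)) := by
  classical
  refine ⟨fun r r' => r = r' ∨ ∃ u ∈ (r' : Set X), ∃ v ∈ (r : Set X),
      Relation.TransGen (Stp F) (F.star u) (F.star v), ?_, ?_, ?_, ?_, ?_⟩
  · -- partial order
    refine { refl := fun r => Or.inl rfl, trans := ?_, antisymm := ?_ }
    · rintro a b c (rfl | ⟨u, hu, v, hv, huv⟩) h2
      · exact h2
      rcases h2 with rfl | ⟨u', hu', v', hv', hu'v'⟩
      · exact Or.inr ⟨u, hu, v, hv, huv⟩
      obtain ⟨p, -, hp⟩ := b.2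
      have hpb : (b : Set X) = bset F p := hp
      rw [hpb] at hu hv'
      have hmid : Relation.TransGen (Stp F) (F.star v') (F.star u) :=
        (mem_bset.mp hv').2.2.trans (mem_bset.mp hu).2.1
      exact Or.inr ⟨u', hu', v, hv, (hu'v'.trans hmid).trans huv⟩
    · rintro a b (rfl | ⟨u, hu, v, hv, huv⟩) h2
      · rfl
      rcases h2 with rfl | ⟨u', hu', v', hv', hu'v'⟩
      · rfl
      obtain ⟨p, -, hp⟩ := a.2
      obtain ⟨q, -, hq⟩ := b.2
      have hpa : (a : Set X) = bset F p := hp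
      have hqb : (b : Set X) = bset F q := hq
      rw [hpa] at hv hu'
      rw [hqb] at hu hv'
      have hqp : Relation.TransGen (Stp F) (F.star q) (F.star p) :=
        ((mem_bset.mp hu).2.1.trans huv).trans (mem_bset.mp hv).2.2
      have hpq : Relation.TransGen (Stp F) (F.star p) (F.star q) :=
        ((mem_bset.mp hu').2.1.trans hu'v').trans (mem_bset.mp hv').2.2
      exact Subtype.ext (hpa.trans ((bset_eq_of_conn hpq hqp).trans hqb.symm))
  · -- isolated invariant sets
    intro r
    obtain ⟨p, hpCR, hp⟩ := r.2
    have hp' : (r : Set X) = bset F p := hp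
    show F.IsoInvIn Set.univ (r : Set X)
    rw [hp']
    exact ⟨invariant_bset (cr_iff.mp hpCR), no_tangency_bset⟩
  · -- disjointness
    intro r r' hne
    refine Set.disjoint_left.mpr (fun {u} hu hu' => hne ?_)
    obtain ⟨p, -, hp⟩ := r.2
    obtain ⟨q, -, hq⟩ := r'.2
    have hp' : (r : Set X) = bset F p := hp
    have hq' : (r' : Set X) = bset F q := hq
    have hu2 : u ∈ bset F p := by rw [← hp']; exact hu
    have hu2' : u ∈ bset F q := by rw [← hq']; exact hu'
    exact Subtype.ext (hp'.trans ((bset_eq_of_overlap hu2 hu2').trans hq'.symm))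
  · -- alpha and omega limit sets in ordered Morse sets
    intro φ hφ
    obtain ⟨z, hz⟩ := exists_back_rec φ
    obtain ⟨w, hw⟩ := exists_fwd_rec φ
    have cycz := rec_cycle hφ hz
    have cycw := rec_cycle_fwd hφ hw
    have hzw : Relation.TransGen (Stp F) (F.star z) (F.star w) := by
      obtain ⟨j, hj, hjw⟩ := hw 0
      obtain ⟨i, hi, hiz⟩ := hz (j - 1)
      have t := sol_tg hφ (show i < j by omega)
      rw [hiz, hjw] at t
      exact tg_star_of_rt t.to_reflTransGen (Or.inl cycz)
    have hwB : F.IsBasicSet (bset F w) := ⟨w, cr_iff.mpr cycw, rfl⟩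
    have hzB : F.IsBasicSet (bset F z) := ⟨z, cr_iff.mpr cycz, rfl⟩
    exact ⟨⟨bset F w, hwB⟩, ⟨bset F z, hzB⟩,
      Or.inr ⟨z, self_mem_bset cycz, w, self_mem_bset cycw, hzw⟩,
      alpha_subset hφ hz, omega_subset hφ hw⟩
  · -- connectedness of Morse sets
    intro φ hφ r hα hω
    obtain ⟨z, hz⟩ := exists_back_rec φ
    obtain ⟨w, hw⟩ := exists_fwd_rec φ
    have cycz := rec_cycle hφ hz
    have cycw := rec_cycle_fwd hφ hw
    obtain ⟨p, -, hp⟩ := r.2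
    have hp' : (r : Set X) = bset F p := hp
    have h1 : F.star z ∈ bset F p := by
      rw [← hp']; exact hα (star_mem_alpha hφ hz)
    have h2 : F.star z ∈ bset F z :=
      mclass_subset_bset (self_mem_bset cycz) (star_spec z).1
    have h3 : F.star w ∈ bset F p := by
      rw [← hp']; exact hω (star_mem_omega hφ hw)
    have h4 : F.star w ∈ bset F w :=
      mclass_subset_bset (self_mem_bset cycw) (star_spec w).1
    have hpz : bset F p = bset F z := bset_eq_of_overlap h1 h2
    have hpw : bset F p = bset F w := bset_eq_of_overlap h3 h4
    have hwz : w ∈ bset F z := by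
      rw [← hpz, hpw]; exact self_mem_bset cycw
    have hwzc : Relation.TransGen (Stp F) (F.star w) (F.star z) := (mem_bset.mp hwz).2.2
    rintro u ⟨m, rfl⟩
    obtain ⟨i, hi, hiz⟩ := hz (m - 1)
    obtain ⟨j, hj, hjw⟩ := hw (m + 1)
    have t1 : Relation.TransGen (Stp F) z (φ m) := by
      have := sol_tg hφ (show i < m by omega)
      rwa [hiz] at this
    have t2 : Relation.TransGen (Stp F) (φ m) w := by
      have := sol_tg hφ (show m < j by omega)
      rwa [hjw] at this
    have s1 : Relation.TransGen (Stp F) (F.star z) (F.star (φ m)) :=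
      tg_star_of_rt t1.to_reflTransGen (Or.inl cycz)
    have s2 : Relation.TransGen (Stp F) (F.star (φ m)) (F.star w) :=
      tg_star_of_rt t2.to_reflTransGen (Or.inr cycw)
    have hmem : φ m ∈ bset F z :=
      mem_bset.mpr ⟨(s2.trans hwzc).trans s1, s1, s2.trans hwzc⟩
    show φ m ∈ (r : Set X)
    rw [hp', hpz]
    exact hmem
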